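/- Effective horizon of goal MDPs: in a deterministic goal MDP where the exploration policy gives every action positive probability, suppose there exists p > 0 such that from every state-action pair (at any timestep) from which the goal is reachable, the probability that the exploration policy reaches the goal by time T is at least p. Then GORP with k = 1 and n = ⌈log(2T)/p⌉ rollouts succeeds with probability at least 1/2, so the effective horizon satisfies H ≤ 1 + log_A(log(2T)/p). -/

import Mathlib

open Finset Classical

/-- Total reward of playing a list of actions from state `s` in a deterministic MDP. -/
def seqReturn {S : Type*} (A : ℕ) (f : S → Fin A → S) (R : S → Fin A → ℝ) :
    S → List (Fin A) → ℝ
  | _, [] => 0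
  | s, a :: rest => R s a + seqReturn A f R (f s a) rest

/-- Value function of a (time-indexed, stochastic) policy by fuel recursion. -/
noncomputable def polV {S : Type*} (A : ℕ) (f : S → Fin A → S) (R : S → Fin A → ℝ)
    (pi : ℕ → S → Fin A → ℝ) : ℕ → ℕ → S → ℝ
  | _, 0, _ => 0
  | t, n + 1, s => ∑ a : Fin A, pi t s a * (R s a + polV A f R pi (t + 1) n (f s a))

/-- `Q^π_t(s,a)` in a horizon-`T` deterministic MDP. -/
noncomputable def polQ {S : Type*} (A T : ℕ) (f : S → Fin A → S) (R : S → Fin A → ℝ)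
    (pi : ℕ → S → Fin A → ℝ) (t : ℕ) (s : S) (a : Fin A) : ℝ :=
  R s a + polV A f R pi (t + 1) (T - t) (f s a)

/-- Optimal value function by fuel recursion. -/
noncomputable def optV {S : Type*} (A : ℕ) (f : S → Fin A → S) (R : S → Fin A → ℝ) :
    ℕ → S → ℝ
  | 0, _ => 0
  | n + 1, s => ⨆ a : Fin A, (R s a + optV A f R n (f s a))

/-- Optimal Q-function at timestep `t` (horizon `T`). -/
noncomputable def optQ {S : Type*} (A T : ℕ) (f : S → Fin A → S) (R : S → Fin A → ℝ)
    (t : ℕ) (s : S) (a : Fin A) : ℝ :=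
  R s a + optV A f R (T - t) (f s a)

/-- Trajectory of a deterministic policy: `polState ... t` is the state at timestep `t+1`. -/
def polState {S : Type*} (A : ℕ) (f : S → Fin A → S) (p : ℕ → S → Fin A) (s1 : S) : ℕ → S
  | 0 => s1
  | t + 1 => f (polState A f p s1 t) (p (t + 1) (polState A f p s1 t))

/-- Probability, under the (time-indexed) policy `pi`, of taking the given list of actions
starting from state `s` at timestep `t` (in a deterministic MDP with transitions `f`). -/
noncomputable def pathWeight {S : Type*} (A : ℕ) (f : S → Fin A → S)
    (pi : ℕ → S → Fin A → ℝ) : ℕ → S → List (Fin A) → ℝ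
  | _, _, [] => 1
  | t, s, a :: rest => pi t s a * pathWeight A f pi (t + 1) (f s a) rest
section Aux

variable {S : Type*} {A : ℕ} {f : S → Fin A → S} {R : S → Fin A → ℝ} {G : Set S}
  {pi : ℕ → S → Fin A → ℝ}

lemma R_nonneg (hR : R = fun s a => if s ∉ G ∧ f s a ∈ G then 1 else 0) (s : S) (a : Fin A) :
    0 ≤ R s a := by
  subst hR; dsimp only; split <;> norm_num

lemma R_le_one (hR : R = fun s a => if s ∉ G ∧ f s a ∈ G then 1 else 0) (s : S) (a : Fin A) :
    R s a ≤ 1 := by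
  subst hR; dsimp only; split <;> norm_num

lemma R_G (hR : R = fun s a => if s ∉ G ∧ f s a ∈ G then 1 else 0) {s : S} (hs : s ∈ G)
    (a : Fin A) : R s a = 0 := by
  subst hR; dsimp only; rw [if_neg]; tauto

lemma R_notG (hR : R = fun s a => if s ∉ G ∧ f s a ∈ G then 1 else 0) {s : S}
    (hs : f s a ∉ G) : R s a = 0 := by
  subst hR; dsimp only; rw [if_neg]; tauto

lemma R_one (hR : R = fun s a => if s ∉ G ∧ f s a ∈ G then 1 else 0) {s : S}
    (hs : s ∉ G) (hs' : f s a ∈ G) : R s a = 1 := by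
  subst hR; dsimp only; rw [if_pos]; tauto

lemma seqReturn_nonneg (hR : R = fun s a => if s ∉ G ∧ f s a ∈ G then 1 else 0)
    (s : S) (l : List (Fin A)) : 0 ≤ seqReturn A f R s l := by
  induction l generalizing s with
  | nil => simp [seqReturn]
  | cons a rest ih =>
    simp only [seqReturn]
    have := R_nonneg hR s a
    have := ih (f s a)
    linarith

lemma seqReturn_G (habs : ∀ s ∈ G, ∀ a, f s a = s)
    (hR : R = fun s a => if s ∉ G ∧ f s a ∈ G then 1 else 0)
    {s : S} (hs : s ∈ G) (l : List (Fin A)) : seqReturn A f R s l = 0 := by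
  induction l generalizing s with
  | nil => simp [seqReturn]
  | cons a rest ih =>
    simp only [seqReturn]
    rw [R_G hR hs, habs s hs a, ih hs, add_zero]

lemma optV_nonneg (hA : 0 < A) (hR : R = fun s a => if s ∉ G ∧ f s a ∈ G then 1 else 0)
    (m : ℕ) (s : S) : 0 ≤ optV A f R m s := by
  induction m generalizing s with
  | zero => simp [optV]
  | succ m ih =>
    have : Nonempty (Fin A) := ⟨⟨0, hA⟩⟩
    simp only [optV]
    refine le_trans ?_ (le_ciSup (Set.finite_range _).bddAbove (Classical.arbitrary (Fin A)))
    have := R_nonneg hR s (Classical.arbitrary (Fin A))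
    have := ih (f s (Classical.arbitrary (Fin A)))
    linarith

lemma optV_G (hA : 0 < A) (habs : ∀ s ∈ G, ∀ a, f s a = s)
    (hR : R = fun s a => if s ∉ G ∧ f s a ∈ G then 1 else 0)
    (m : ℕ) {s : S} (hs : s ∈ G) : optV A f R m s = 0 := by
  induction m generalizing s with
  | zero => simp [optV]
  | succ m ih =>
    have : Nonempty (Fin A) := ⟨⟨0, hA⟩⟩
    simp only [optV]
    have : ∀ a : Fin A, R s a + optV A f R m (f s a) = 0 := by
      intro a
      rw [R_G hR hs, habs s hs a, ih hs, add_zero]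
    simp only [this, ciSup_const]

lemma optV_le_one (hA : 0 < A) (habs : ∀ s ∈ G, ∀ a, f s a = s)
    (hR : R = fun s a => if s ∉ G ∧ f s a ∈ G then 1 else 0)
    (m : ℕ) (s : S) : optV A f R m s ≤ 1 := by
  induction m generalizing s with
  | zero => simp [optV]
  | succ m ih =>
    have : Nonempty (Fin A) := ⟨⟨0, hA⟩⟩
    simp only [optV]
    refine ciSup_le fun a => ?_
    by_cases h : f s a ∈ G
    · rw [optV_G hA habs hR m h]
      have := R_le_one hR s a; linarith
    · rw [R_notG hR h]
      have := ih (f s a); linarith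

lemma optV_zero_or_one (hA : 0 < A) (habs : ∀ s ∈ G, ∀ a, f s a = s)
    (hR : R = fun s a => if s ∉ G ∧ f s a ∈ G then 1 else 0)
    (m : ℕ) (s : S) : optV A f R m s = 0 ∨ optV A f R m s = 1 := by
  have : Nonempty (Fin A) := ⟨⟨0, hA⟩⟩
  induction m generalizing s with
  | zero => left; simp [optV]
  | succ m ih =>
    have hval : ∀ a : Fin A, R s a + optV A f R m (f s a) = 0 ∨
        R s a + optV A f R m (f s a) = 1 := by
      intro a
      by_cases h : f s a ∈ G
      · rw [optV_G hA habs hR m h, add_zero]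
        by_cases h2 : s ∈ G
        · left; exact R_G hR h2 a
        · right; exact R_one hR h2 h
      · rw [R_notG hR h, zero_add]; exact ih (f s a)
    by_cases h1 : ∃ a : Fin A, R s a + optV A f R m (f s a) = 1
    · right
      obtain ⟨a, ha⟩ := h1
      simp only [optV]
      refine le_antisymm (ciSup_le fun a' => ?_) ?_
      · rcases hval a' with h | h <;> rw [h] <;> norm_num
      · rw [← ha]
        exact le_ciSup (f := fun a : Fin A => R s a + optV A f R m (f s a))
          (Set.finite_range _).bddAbove a
    · left
      push_neg at h1
      have : ∀ a : Fin A, R s a + optV A f R m (f s a) = 0 := by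
        intro a; rcases hval a with h | h
        · exact h
        · exact absurd h (h1 a)
      simp only [optV, this, ciSup_const]

lemma optV_succ_exists (hA : 0 < A) (m : ℕ) {s : S}
    (hs : optV A f R (m + 1) s = 1) :
    ∃ a : Fin A, R s a + optV A f R m (f s a) = 1 := by
  have : Nonempty (Fin A) := ⟨⟨0, hA⟩⟩
  obtain ⟨a, -, ha⟩ := Finset.exists_max_image Finset.univ
    (fun a : Fin A => R s a + optV A f R m (f s a)) ⟨Classical.arbitrary (Fin A), by simp⟩
  refine ⟨a, le_antisymm ?_ ?_⟩
  · rw [← hs]; simp only [optV]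
    exact le_ciSup (f := fun a : Fin A => R s a + optV A f R m (f s a))
      (Set.finite_range _).bddAbove a
  · rw [← hs]; simp only [optV]
    exact ciSup_le fun a' => ha a' (Finset.mem_univ a')

lemma seqReturn_le_optV (hA : 0 < A) (hR : R = fun s a => if s ∉ G ∧ f s a ∈ G then 1 else 0)
    (l : List (Fin A)) (m : ℕ) (s : S) (h : l.length ≤ m) :
    seqReturn A f R s l ≤ optV A f R m s := by
  have : Nonempty (Fin A) := ⟨⟨0, hA⟩⟩
  induction l generalizing s m with
  | nil => simpa [seqReturn] using optV_nonneg hA hR m s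
  | cons a rest ih =>
    obtain ⟨m', rfl⟩ : ∃ m', m = m' + 1 := by
      cases m with
      | zero => simp at h
      | succ m' => exact ⟨m', rfl⟩
    simp only [seqReturn, optV]
    refine le_trans ?_ (le_ciSup (Set.finite_range _).bddAbove a)
    have := ih m' (f s a) (by simpa using h)
    linarith

lemma seqReturn_zero_or_one (habs : ∀ s ∈ G, ∀ a, f s a = s)
    (hR : R = fun s a => if s ∉ G ∧ f s a ∈ G then 1 else 0)
    (l : List (Fin A)) (s : S) :
    seqReturn A f R s l = 0 ∨ seqReturn A f R s l = 1 := by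
  induction l generalizing s with
  | nil => left; simp [seqReturn]
  | cons a rest ih =>
    by_cases hs : s ∈ G
    · left; exact seqReturn_G habs hR hs _
    · simp only [seqReturn]
      by_cases h : f s a ∈ G
      · right; rw [R_one hR hs h, seqReturn_G habs hR h, add_zero]
      · rw [R_notG hR h, zero_add]; exact ih (f s a)

lemma pathWeight_nonneg (hpos : ∀ t s a, 0 < pi t s a) (t : ℕ) (s : S) (l : List (Fin A)) :
    0 ≤ pathWeight A f pi t s l := by
  induction l generalizing t s with
  | nil => simp [pathWeight]
  | cons a rest ih =>
    simp only [pathWeight]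
    exact mul_nonneg (hpos t s a).le (ih _ _)

lemma polV_nonneg (hR : R = fun s a => if s ∉ G ∧ f s a ∈ G then 1 else 0)
    (hpos : ∀ t s a, 0 < pi t s a) (t k : ℕ) (s : S) :
    0 ≤ polV A f R pi t k s := by
  induction k generalizing t s with
  | zero => simp [polV]
  | succ k ih =>
    simp only [polV]
    refine Finset.sum_nonneg fun a _ => mul_nonneg (hpos t s a).le ?_
    have := R_nonneg hR s a
    have := ih (t+1) (f s a)
    linarith

lemma polV_G (habs : ∀ s ∈ G, ∀ a, f s a = s)
    (hR : R = fun s a => if s ∉ G ∧ f s a ∈ G then 1 else 0)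
    (t k : ℕ) {s : S} (hs : s ∈ G) : polV A f R pi t k s = 0 := by
  induction k generalizing t s with
  | zero => simp [polV]
  | succ k ih =>
    simp only [polV]
    refine Finset.sum_eq_zero fun a _ => ?_
    rw [habs s hs a, R_G hR hs, ih (t+1) hs, add_zero, mul_zero]

lemma polV_le_one (habs : ∀ s ∈ G, ∀ a, f s a = s)
    (hR : R = fun s a => if s ∉ G ∧ f s a ∈ G then 1 else 0)
    (hpos : ∀ t s a, 0 < pi t s a) (hprob : ∀ t s, ∑ a : Fin A, pi t s a = 1)
    (t k : ℕ) (s : S) : polV A f R pi t k s ≤ 1 := by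
  induction k generalizing t s with
  | zero => simp [polV]
  | succ k ih =>
    simp only [polV]
    calc ∑ a : Fin A, pi t s a * (R s a + polV A f R pi (t + 1) k (f s a))
        ≤ ∑ a : Fin A, pi t s a * 1 := by
          refine Finset.sum_le_sum fun a _ => mul_le_mul_of_nonneg_left ?_ (hpos t s a).le
          by_cases h : f s a ∈ G
          · rw [polV_G habs hR _ _ h]
            have := R_le_one hR s a; linarith
          · rw [R_notG hR h]
            have := ih (t+1) (f s a); linarith
      _ = 1 := by simp [hprob t s]

end Aux
section Aux2

variable {S : Type*} {A : ℕ} {f : S → Fin A → S} {R : S → Fin A → ℝ} {G : Set S}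
  {pi : ℕ → S → Fin A → ℝ}

lemma sum_fn_succ {M : ℕ} (F : (Fin (M + 1) → Fin A) → ℝ) :
    ∑ v : Fin (M + 1) → Fin A, F v
      = ∑ a : Fin A, ∑ v : Fin M → Fin A, F (Fin.cons a v) := by
  rw [← Equiv.sum_comp (Fin.consEquiv (fun _ : Fin (M + 1) => Fin A)) F,
    Fintype.sum_prod_type]
  rfl

lemma ofFn_cons {M : ℕ} (a : Fin A) (v : Fin M → Fin A) :
    List.ofFn (Fin.cons a v : Fin (M + 1) → Fin A) = a :: List.ofFn v := by
  rw [List.ofFn_succ]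
  simp [Fin.cons_zero, Fin.cons_succ]

lemma sum_pathWeight_ofFn (hprob : ∀ t s, ∑ a : Fin A, pi t s a = 1)
    (M : ℕ) : ∀ k ≤ M, ∀ (t : ℕ) (s : S),
    ∑ v : Fin M → Fin A, pathWeight A f pi t s ((List.ofFn v).take k)
      = (A : ℝ) ^ (M - k) := by
  induction M with
  | zero =>
    intro k hk t s
    interval_cases k
    simp [pathWeight]
  | succ M ih =>
    intro k hk t s
    cases k with
    | zero =>
      simp only [List.take_zero, pathWeight]
      simp [Finset.card_univ]
    | succ k =>
      rw [sum_fn_succ (fun v => pathWeight A f pi t s ((List.ofFn v).take (k + 1)))]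
      have : ∀ (a : Fin A) (v : Fin M → Fin A),
          pathWeight A f pi t s ((List.ofFn (Fin.cons a v)).take (k + 1))
            = pi t s a * pathWeight A f pi (t + 1) (f s a) ((List.ofFn v).take k) := by
        intro a v
        rw [ofFn_cons, List.take_succ_cons]
        rfl
      simp only [this, ← Finset.mul_sum]
      have hk' : k ≤ M := by omega
      have hMk : M + 1 - (k + 1) = M - k := by omega
      rw [hMk]
      calc ∑ a : Fin A, pi t s a * ∑ v : Fin M → Fin A,
            pathWeight A f pi (t + 1) (f s a) ((List.ofFn v).take k)
          = ∑ a : Fin A, pi t s a * (A : ℝ) ^ (M - k) := by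
            refine Finset.sum_congr rfl fun a _ => ?_
            rw [ih k hk' (t + 1) (f s a)]
        _ = (A : ℝ) ^ (M - k) := by rw [← Finset.sum_mul, hprob t s, one_mul]

lemma sum_pathWeight_seqReturn (hprob : ∀ t s, ∑ a : Fin A, pi t s a = 1)
    (M : ℕ) : ∀ k ≤ M, ∀ (t : ℕ) (s : S),
    ∑ v : Fin M → Fin A, pathWeight A f pi t s ((List.ofFn v).take k)
        * seqReturn A f R s ((List.ofFn v).take k)
      = (A : ℝ) ^ (M - k) * polV A f R pi t k s := by
  induction M with
  | zero =>
    intro k hk t s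
    interval_cases k
    simp [pathWeight, seqReturn, polV]
  | succ M ih =>
    intro k hk t s
    cases k with
    | zero =>
      simp [pathWeight, seqReturn, polV]
    | succ k =>
      rw [sum_fn_succ (fun v => pathWeight A f pi t s ((List.ofFn v).take (k + 1))
        * seqReturn A f R s ((List.ofFn v).take (k + 1)))]
      have hk' : k ≤ M := by omega
      have hMk : M + 1 - (k + 1) = M - k := by omega
      have key : ∀ a : Fin A, ∑ v : Fin M → Fin A,
          pathWeight A f pi t s ((List.ofFn (Fin.cons a v)).take (k + 1))
            * seqReturn A f R s ((List.ofFn (Fin.cons a v)).take (k + 1))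
          = pi t s a * ((A : ℝ) ^ (M - k)
              * (R s a + polV A f R pi (t + 1) k (f s a))) := by
        intro a
        have : ∀ v : Fin M → Fin A,
            pathWeight A f pi t s ((List.ofFn (Fin.cons a v)).take (k + 1))
              * seqReturn A f R s ((List.ofFn (Fin.cons a v)).take (k + 1))
            = pi t s a * (pathWeight A f pi (t + 1) (f s a) ((List.ofFn v).take k)
                * (R s a + seqReturn A f R (f s a) ((List.ofFn v).take k))) := by
          intro v
          rw [ofFn_cons, List.take_succ_cons]
          show pi t s a * pathWeight A f pi (t + 1) (f s a) ((List.ofFn v).take k)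
            * (R s a + seqReturn A f R (f s a) ((List.ofFn v).take k)) = _
          ring
        simp only [this, ← Finset.mul_sum]
        congr 1
        have expand : ∑ v : Fin M → Fin A,
            pathWeight A f pi (t + 1) (f s a) ((List.ofFn v).take k)
              * (R s a + seqReturn A f R (f s a) ((List.ofFn v).take k))
            = (∑ v : Fin M → Fin A,
                pathWeight A f pi (t + 1) (f s a) ((List.ofFn v).take k)) * R s a
              + ∑ v : Fin M → Fin A,
                  pathWeight A f pi (t + 1) (f s a) ((List.ofFn v).take k)
                    * seqReturn A f R (f s a) ((List.ofFn v).take k) := by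
          rw [Finset.sum_mul, ← Finset.sum_add_distrib]
          exact Finset.sum_congr rfl fun v _ => by ring
        rw [expand, sum_pathWeight_ofFn hprob M k hk' (t + 1) (f s a),
          ih k hk' (t + 1) (f s a)]
        ring
      simp only [key, ← Finset.mul_sum]
      rw [hMk]
      show ∑ a : Fin A, pi t s a * ((A:ℝ) ^ (M - k) * (R s a + polV A f R pi (t+1) k (f s a)))
        = (A : ℝ) ^ (M - k) * polV A f R pi t (k + 1) s
      simp only [polV, Finset.mul_sum]
      exact Finset.sum_congr rfl fun a _ => by ring

end Aux2
section Aux3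

variable {S : Type*}

/-- Monte-Carlo Q estimate as a function of the sampled suffixes `c`. -/
noncomputable def qh (A T n : ℕ) (f : S → Fin A → S) (R : S → Fin A → ℝ)
    (i : ℕ) (s : S) (c : Fin A → Fin n → (Fin T → Fin A)) (a : Fin A) : ℝ :=
  (∑ j : Fin n, seqReturn A f R s ((a :: List.ofFn (c a j)).take (T - i))) / n

/-- Least maximizer of the Monte-Carlo Q estimate. -/
noncomputable def aF (A T n : ℕ) (hA : 0 < A) (f : S → Fin A → S) (R : S → Fin A → ℝ)
    (i : ℕ) (s : S) (c : Fin A → Fin n → (Fin T → Fin A)) : Fin A :=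
  (Finset.univ.filter fun a => ∀ a', qh A T n f R i s c a' ≤ qh A T n f R i s c a).min'
    (by
      obtain ⟨a, -, ha⟩ := Finset.exists_max_image Finset.univ (qh A T n f R i s c)
        ⟨⟨0, hA⟩, Finset.mem_univ _⟩
      exact ⟨a, Finset.mem_filter.2 ⟨Finset.mem_univ _, fun a' => ha a' (Finset.mem_univ _)⟩⟩)

lemma aF_max (A T n : ℕ) (hA : 0 < A) (f : S → Fin A → S) (R : S → Fin A → ℝ)
    (i : ℕ) (s : S) (c : Fin A → Fin n → (Fin T → Fin A)) (a' : Fin A) :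
    qh A T n f R i s c a' ≤ qh A T n f R i s c (aF A T n hA f R i s c) := by
  have := Finset.min'_mem
    (Finset.univ.filter fun a => ∀ a', qh A T n f R i s c a' ≤ qh A T n f R i s c a)
    (by
      obtain ⟨a, -, ha⟩ := Finset.exists_max_image Finset.univ (qh A T n f R i s c)
        ⟨⟨0, hA⟩, Finset.mem_univ _⟩
      exact ⟨a, Finset.mem_filter.2 ⟨Finset.mem_univ _, fun a' => ha a' (Finset.mem_univ _)⟩⟩)
  exact (Finset.mem_filter.1 this).2 a'

lemma aF_least (A T n : ℕ) (hA : 0 < A) (f : S → Fin A → S) (R : S → Fin A → ℝ)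
    (i : ℕ) (s : S) (c : Fin A → Fin n → (Fin T → Fin A)) (a : Fin A)
    (ha : ∀ a', qh A T n f R i s c a' ≤ qh A T n f R i s c a) :
    aF A T n hA f R i s c ≤ a :=
  Finset.min'_le _ _ (Finset.mem_filter.2 ⟨Finset.mem_univ _, ha⟩)

/-- GORP's next state as a function of the sampled suffixes. -/
noncomputable def stepF (A T n : ℕ) (hA : 0 < A) (f : S → Fin A → S) (R : S → Fin A → ℝ)
    (i : ℕ) (s : S) (c : Fin A → Fin n → (Fin T → Fin A)) : S :=
  f s (aF A T n hA f R i s c)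

/-- The probability weight of one iteration's samples. -/
noncomputable def W (A T n : ℕ) (f : S → Fin A → S) (pi : ℕ → S → Fin A → ℝ)
    (i : ℕ) (s : S) (c : Fin A → Fin n → (Fin T → Fin A)) : ℝ :=
  ∏ a : Fin A, ∏ j : Fin n,
    pathWeight A f pi (i + 2) (f s a) ((List.ofFn (c a j)).take (T - i - 1))

lemma W_nonneg (A T n : ℕ) (f : S → Fin A → S) (pi : ℕ → S → Fin A → ℝ)
    (hpos : ∀ t s a, 0 < pi t s a) (i : ℕ) (s : S)
    (c : Fin A → Fin n → (Fin T → Fin A)) : 0 ≤ W A T n f pi i s c :=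
  Finset.prod_nonneg fun a _ => Finset.prod_nonneg fun j _ =>
    pathWeight_nonneg hpos _ _ _

lemma W_sum (A T n : ℕ) (f : S → Fin A → S) (pi : ℕ → S → Fin A → ℝ)
    (hprob : ∀ t s, ∑ a : Fin A, pi t s a = 1) (i : ℕ) (hi : i + 1 ≤ T) (s : S) :
    ∑ c : Fin A → Fin n → (Fin T → Fin A), W A T n f pi i s c
      = (((A : ℝ) ^ (i + 1)) ^ n) ^ A := by
  simp only [W]
  rw [← Fintype.prod_sum
    (fun (a : Fin A) (b : Fin n → (Fin T → Fin A)) => ∏ j : Fin n,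
      pathWeight A f pi (i + 2) (f s a) ((List.ofFn (b j)).take (T - i - 1)))]
  have inner : ∀ a : Fin A, ∑ b : Fin n → (Fin T → Fin A), ∏ j : Fin n,
      pathWeight A f pi (i + 2) (f s a) ((List.ofFn (b j)).take (T - i - 1))
      = ((A : ℝ) ^ (i + 1)) ^ n := by
    intro a
    rw [← Fintype.prod_sum
      (fun (_ : Fin n) (v : Fin T → Fin A) =>
        pathWeight A f pi (i + 2) (f s a) ((List.ofFn v).take (T - i - 1)))]
    have : ∑ v : Fin T → Fin A,
        pathWeight A f pi (i + 2) (f s a) ((List.ofFn v).take (T - i - 1))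
        = (A : ℝ) ^ (i + 1) := by
      rw [sum_pathWeight_ofFn hprob T (T - i - 1) (by omega) (i + 2) (f s a)]
      congr 1
      omega
    simp [this]
  simp [inner, Finset.card_univ]

lemma W_sum_pos (A : ℕ) (hA : 0 < A) (i n : ℕ) : (1:ℝ) ≤ (((A : ℝ) ^ (i + 1)) ^ n) ^ A := by
  have h1 : (1:ℝ) ≤ (A:ℝ) := by exact_mod_cast hA
  exact one_le_pow₀ (one_le_pow₀ (one_le_pow₀ h1))

end Aux3
section Aux4

variable {S : Type*} {A : ℕ} {f : S → Fin A → S} {R : S → Fin A → ℝ} {G : Set S}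
  {pi : ℕ → S → Fin A → ℝ}

lemma zMass (hA : 0 < A) (habs : ∀ s ∈ G, ∀ a, f s a = s)
    (hR : R = fun s a => if s ∉ G ∧ f s a ∈ G then 1 else 0)
    (hpos : ∀ t s a, 0 < pi t s a) (hprob : ∀ t s, ∑ a : Fin A, pi t s a = 1)
    {T : ℕ} {p : ℝ} (i : ℕ) (hi : i + 1 ≤ T) (s : S) (astar : Fin A)
    (hQ : p ≤ polQ A T f R pi (i + 1) s astar) :
    ∑ v ∈ Finset.univ.filter (fun v : Fin T → Fin A =>
        seqReturn A f R s ((astar :: List.ofFn v).take (T - i)) ≠ 1),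
      pathWeight A f pi (i + 2) (f s astar) ((List.ofFn v).take (T - i - 1))
      ≤ (1 - p) * (A : ℝ) ^ (i + 1) := by
  set g : (Fin T → Fin A) → ℝ := fun v =>
    pathWeight A f pi (i + 2) (f s astar) ((List.ofFn v).take (T - i - 1)) with hg
  set r : (Fin T → Fin A) → ℝ := fun v =>
    seqReturn A f R s ((astar :: List.ofFn v).take (T - i)) with hrdef
  have hTi : T - i = (T - i - 1) + 1 := by omega
  have hr : ∀ v, r v = R s astar
      + seqReturn A f R (f s astar) ((List.ofFn v).take (T - i - 1)) := by
    intro v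
    have hlist : (astar :: List.ofFn v).take (T - i)
        = astar :: ((List.ofFn v).take (T - i - 1)) := by
      rw [hTi, List.take_succ_cons]
      simp
    simp only [hrdef, hlist, seqReturn]
  have hexp : T - (T - i - 1) = i + 1 := by omega
  have htot : ∑ v : Fin T → Fin A, g v = (A : ℝ) ^ (i + 1) := by
    rw [hg]
    rw [sum_pathWeight_ofFn hprob T (T - i - 1) (by omega) (i + 2) (f s astar), hexp]
  have hwtd : ∑ v : Fin T → Fin A, g v * r v
      = (A : ℝ) ^ (i + 1) * polQ A T f R pi (i + 1) s astar := by
    have expand : ∑ v : Fin T → Fin A, g v * r v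
        = (∑ v : Fin T → Fin A, g v) * R s astar
          + ∑ v : Fin T → Fin A, g v
              * seqReturn A f R (f s astar) ((List.ofFn v).take (T - i - 1)) := by
      rw [Finset.sum_mul, ← Finset.sum_add_distrib]
      exact Finset.sum_congr rfl fun v _ => by rw [hr v]; ring
    rw [expand, htot, hg]
    simp only []
    rw [sum_pathWeight_seqReturn hprob T (T - i - 1) (by omega) (i + 2) (f s astar), hexp]
    have : T - (i + 1) = T - i - 1 := by omega
    rw [polQ, this]
    ring
  have hgnn : ∀ v, 0 ≤ g v := fun v => pathWeight_nonneg hpos _ _ _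
  have hind : ∑ v : Fin T → Fin A, g v * r v
      ≤ ∑ v ∈ Finset.univ.filter (fun v => r v = 1), g v := by
    rw [Finset.sum_filter]
    refine Finset.sum_le_sum fun v _ => ?_
    rcases seqReturn_zero_or_one habs hR ((astar :: List.ofFn v).take (T - i)) s with h | h
    · rw [show r v = 0 from h, mul_zero]
      split <;> [exact hgnn v; exact le_refl 0]
    · rw [show r v = 1 from h, mul_one]
      simp
  have hsplit := Finset.sum_filter_add_sum_filter_not Finset.univ
    (fun v : Fin T → Fin A => r v = 1) g
  have hApos : (0:ℝ) ≤ (A : ℝ) ^ (i + 1) := by positivity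
  have hpolQ : (A : ℝ) ^ (i + 1) * p ≤ (A : ℝ) ^ (i + 1)
      * polQ A T f R pi (i + 1) s astar := by
    exact mul_le_mul_of_nonneg_left hQ hApos
  have : ∑ v ∈ Finset.univ.filter (fun v => ¬ r v = 1), g v
      = (∑ v : Fin T → Fin A, g v)
        - ∑ v ∈ Finset.univ.filter (fun v => r v = 1), g v := by
    rw [← hsplit]; ring
  rw [show (Finset.univ.filter fun v : Fin T → Fin A =>
      seqReturn A f R s ((astar :: List.ofFn v).take (T - i)) ≠ 1)
    = Finset.univ.filter (fun v => ¬ r v = 1) from rfl, this, htot]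
  nlinarith [hind, hwtd, hpolQ]

lemma badMass (hA : 0 < A) (habs : ∀ s ∈ G, ∀ a, f s a = s)
    (hR : R = fun s a => if s ∉ G ∧ f s a ∈ G then 1 else 0)
    (hpos : ∀ t s a, 0 < pi t s a) (hprob : ∀ t s, ∑ a : Fin A, pi t s a = 1)
    {T n : ℕ} (hn0 : 0 < n) {p : ℝ} (hp1 : p ≤ 1)
    (i m : ℕ) (him : i + (m + 1) = T) (s : S) (hsG : s ∉ G)
    (astar : Fin A) (hQ : p ≤ polQ A T f R pi (i + 1) s astar) :
    ∑ c ∈ Finset.univ.filter (fun c : Fin A → Fin n → (Fin T → Fin A) =>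
        ¬(stepF A T n hA f R i s c ∈ G
          ∨ optV A f R m (stepF A T n hA f R i s c) = 1)),
      W A T n f pi i s c
      ≤ (1 - p) ^ n * (((A : ℝ) ^ (i + 1)) ^ n) ^ A := by
  classical
  have hi : i + 1 ≤ T := by omega
  set Zf : Finset (Fin T → Fin A) := Finset.univ.filter (fun v : Fin T → Fin A =>
    seqReturn A f R s ((astar :: List.ofFn v).take (T - i)) ≠ 1) with hZf
  set t : ∀ _ : Fin A, Finset (Fin n → (Fin T → Fin A)) := fun a =>
    if a = astar then Fintype.piFinset (fun _ : Fin n => Zf) else Finset.univ with ht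
  -- bad set is contained in the product set
  have hsub : Finset.univ.filter (fun c : Fin A → Fin n → (Fin T → Fin A) =>
      ¬(stepF A T n hA f R i s c ∈ G
        ∨ optV A f R m (stepF A T n hA f R i s c) = 1))
      ⊆ Fintype.piFinset t := by
    intro c hc
    rw [Finset.mem_filter] at hc
    push_neg at hc
    obtain ⟨-, hcG, hcV⟩ := hc
    rw [Fintype.mem_piFinset]
    intro a
    show c a ∈ if a = astar then Fintype.piFinset (fun _ : Fin n => Zf) else Finset.univ
    by_cases ha : a = astar
    · subst ha
      -- now `a` denotes the optimal action
      rw [if_pos rfl, Fintype.mem_piFinset]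
      intro j
      rw [hZf, Finset.mem_filter]
      refine ⟨Finset.mem_univ _, ?_⟩
      -- the chosen action's estimate is 0, hence a*'s estimate is 0, hence every rollout is 0
      set b := aF A T n hA f R i s c with hb
      have hfb : f s b ∉ G := hcG
      have hoptb : optV A f R m (f s b) = 0 := by
        rcases optV_zero_or_one hA habs hR m (f s b) with h | h
        · exact h
        · exact absurd h hcV
      have hqb : qh A T n f R i s c b = 0 := by
        rw [qh]
        have : ∀ j : Fin n,
            seqReturn A f R s ((b :: List.ofFn (c b j)).take (T - i)) = 0 := by
          intro j
          have hTi : T - i = m + 1 := by omega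
          rw [hTi, List.take_succ_cons]
          simp only [seqReturn]
          rw [R_notG hR hfb, zero_add]
          have hle : seqReturn A f R (f s b) ((List.ofFn (c b j)).take m)
              ≤ optV A f R m (f s b) := by
            refine seqReturn_le_optV hA hR _ m (f s b) ?_
            simp [List.length_take]
          have hge := seqReturn_nonneg hR (f s b) ((List.ofFn (c b j)).take m)
          rw [hoptb] at hle
          linarith
        simp only [qh, this, Finset.sum_const_zero, zero_div]
      have hqa : qh A T n f R i s c a ≤ 0 := by
        rw [← hqb]; exact aF_max A T n hA f R i s c a
      rw [qh] at hqa
      have hnn : ∀ j : Fin n, 0 ≤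
          seqReturn A f R s ((a :: List.ofFn (c a j)).take (T - i)) :=
        fun j => seqReturn_nonneg hR _ _
      have hsum0 : ∑ j : Fin n,
          seqReturn A f R s ((a :: List.ofFn (c a j)).take (T - i)) = 0 := by
        have hsumnn : 0 ≤ ∑ j : Fin n,
            seqReturn A f R s ((a :: List.ofFn (c a j)).take (T - i)) :=
          Finset.sum_nonneg fun j _ => hnn j
        have hnpos : (0:ℝ) < n := by exact_mod_cast hn0
        rcases le_or_gt (∑ j : Fin n,
            seqReturn A f R s ((a :: List.ofFn (c a j)).take (T - i))) 0 with h | h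
        · linarith
        · exfalso
          have : 0 < (∑ j : Fin n,
              seqReturn A f R s ((a :: List.ofFn (c a j)).take (T - i))) / n :=
            div_pos h hnpos
          linarith
      have := (Finset.sum_eq_zero_iff_of_nonneg fun j _ => hnn j).1 hsum0 j
        (Finset.mem_univ j)
      rw [this ]
      norm_num
    · rw [if_neg ha]; exact Finset.mem_univ _
  have hWnn : ∀ c, 0 ≤ W A T n f pi i s c := W_nonneg A T n f pi hpos i s
  refine le_trans (Finset.sum_le_sum_of_subset_of_nonneg hsub
    fun c _ _ => hWnn c) ?_
  -- factorize the product-set mass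
  have hfact : ∑ c ∈ Fintype.piFinset t, W A T n f pi i s c
      = ∏ a : Fin A, ∑ b ∈ t a, ∏ j : Fin n,
          pathWeight A f pi (i + 2) (f s a) ((List.ofFn (b j)).take (T - i - 1)) := by
    rw [Finset.prod_univ_sum t (fun (a : Fin A) (b : Fin n → (Fin T → Fin A)) =>
      ∏ j : Fin n, pathWeight A f pi (i + 2) (f s a) ((List.ofFn (b j)).take (T - i - 1)))]
    rfl
  rw [hfact]
  have hfull : ∀ a : Fin A, ∑ b : Fin n → (Fin T → Fin A), ∏ j : Fin n,
      pathWeight A f pi (i + 2) (f s a) ((List.ofFn (b j)).take (T - i - 1))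
      = ((A : ℝ) ^ (i + 1)) ^ n := by
    intro a
    rw [← Fintype.prod_sum
      (fun (_ : Fin n) (v : Fin T → Fin A) =>
        pathWeight A f pi (i + 2) (f s a) ((List.ofFn v).take (T - i - 1)))]
    have : ∑ v : Fin T → Fin A,
        pathWeight A f pi (i + 2) (f s a) ((List.ofFn v).take (T - i - 1))
        = (A : ℝ) ^ (i + 1) := by
      rw [sum_pathWeight_ofFn hprob T (T - i - 1) (by omega) (i + 2) (f s a)]
      congr 1
      omega
    simp [this]
  have hZmass : ∑ v ∈ Zf,
      pathWeight A f pi (i + 2) (f s astar) ((List.ofFn v).take (T - i - 1))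
      ≤ (1 - p) * (A : ℝ) ^ (i + 1) :=
    zMass hA habs hR hpos hprob i hi s astar hQ
  have hZnn : 0 ≤ ∑ v ∈ Zf,
      pathWeight A f pi (i + 2) (f s astar) ((List.ofFn v).take (T - i - 1)) :=
    Finset.sum_nonneg fun v _ => pathWeight_nonneg hpos _ _ _
  have hstar : ∑ b ∈ t astar, ∏ j : Fin n,
      pathWeight A f pi (i + 2) (f s astar) ((List.ofFn (b j)).take (T - i - 1))
      ≤ ((1 - p) * (A : ℝ) ^ (i + 1)) ^ n := by
    have htstar : t astar = Fintype.piFinset (fun _ : Fin n => Zf) := by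
      simp only [ht, if_pos rfl]
    rw [htstar]
    rw [Finset.sum_prod_piFinset Zf (fun (_ : Fin n) (v : Fin T → Fin A) =>
      pathWeight A f pi (i + 2) (f s astar) ((List.ofFn v).take (T - i - 1)))]
    calc ∏ _j : Fin n, ∑ v ∈ Zf,
          pathWeight A f pi (i + 2) (f s astar) ((List.ofFn v).take (T - i - 1))
        = (∑ v ∈ Zf, pathWeight A f pi (i + 2) (f s astar)
            ((List.ofFn v).take (T - i - 1))) ^ n := by
          rw [Finset.prod_const, Finset.card_univ, Fintype.card_fin]
      _ ≤ ((1 - p) * (A : ℝ) ^ (i + 1)) ^ n := pow_le_pow_left₀ hZnn hZmass n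
  -- combine
  have hApow_nn : (0:ℝ) ≤ ((A : ℝ) ^ (i + 1)) ^ n := by positivity
  have hterm_nn : ∀ a : Fin A, 0 ≤ ∑ b ∈ t a, ∏ j : Fin n,
      pathWeight A f pi (i + 2) (f s a) ((List.ofFn (b j)).take (T - i - 1)) :=
    fun a => Finset.sum_nonneg fun b _ => Finset.prod_nonneg fun j _ =>
      pathWeight_nonneg hpos _ _ _
  rw [← Finset.mul_prod_erase Finset.univ _ (Finset.mem_univ astar)]
  have herase : ∀ a ∈ Finset.univ.erase astar, ∑ b ∈ t a, ∏ j : Fin n,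
      pathWeight A f pi (i + 2) (f s a) ((List.ofFn (b j)).take (T - i - 1))
      = ((A : ℝ) ^ (i + 1)) ^ n := by
    intro a ha
    have hta : t a = Finset.univ := by
      simp only [ht, if_neg (Finset.mem_erase.1 ha).1]
    rw [hta]
    exact hfull a
  rw [Finset.prod_congr rfl herase, Finset.prod_const]
  have hcard : (Finset.univ.erase astar).card = A - 1 := by
    rw [Finset.card_erase_of_mem (Finset.mem_univ astar), Finset.card_univ,
      Fintype.card_fin]
  rw [hcard]
  have hbound : ∑ b ∈ t astar, ∏ j : Fin n,
      pathWeight A f pi (i + 2) (f s astar) ((List.ofFn (b j)).take (T - i - 1))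
      ≤ (1 - p) ^ n * ((A : ℝ) ^ (i + 1)) ^ n := by
    calc _ ≤ ((1 - p) * (A : ℝ) ^ (i + 1)) ^ n := hstar
      _ = (1 - p) ^ n * ((A : ℝ) ^ (i + 1)) ^ n := mul_pow _ _ _
  calc (∑ b ∈ t astar, ∏ j : Fin n,
        pathWeight A f pi (i + 2) (f s astar) ((List.ofFn (b j)).take (T - i - 1)))
        * (((A : ℝ) ^ (i + 1)) ^ n) ^ (A - 1)
      ≤ ((1 - p) ^ n * ((A : ℝ) ^ (i + 1)) ^ n) * (((A : ℝ) ^ (i + 1)) ^ n) ^ (A - 1) := by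
        refine mul_le_mul_of_nonneg_right hbound (by positivity)
    _ = (1 - p) ^ n * (((A : ℝ) ^ (i + 1)) ^ n) ^ A := by
        rw [mul_assoc]
        congr 1
        rw [← pow_succ']
        congr 1
        omega

end Aux4
section Aux5

variable {S : Type*}

lemma sum_fn_succ' {β : Type*} [Fintype β] {M : ℕ} (F : (Fin (M + 1) → β) → ℝ) :
    ∑ v : Fin (M + 1) → β, F v = ∑ c : β, ∑ v : Fin M → β, F (Fin.cons c v) := by
  rw [← Equiv.sum_comp (Fin.consEquiv (fun _ : Fin (M + 1) => β)) F,
    Fintype.sum_prod_type]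
  rfl

/-- Cumulative weight of a GORP run of `m` iterations starting at iteration `i`. -/
noncomputable def wrec (A T n : ℕ) (hA : 0 < A) (f : S → Fin A → S) (R : S → Fin A → ℝ)
    (pi : ℕ → S → Fin A → ℝ) :
    (m : ℕ) → ℕ → S → (Fin m → (Fin A → Fin n → (Fin T → Fin A))) → ℝ
  | 0, _, _, _ => 1
  | m + 1, i, s, u => W A T n f pi i s (u 0)
      * wrec A T n hA f R pi m (i + 1) (stepF A T n hA f R i s (u 0)) (Fin.tail u)

/-- Cumulative reward of a GORP run of `m` iterations starting at iteration `i`. -/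
noncomputable def retrec (A T n : ℕ) (hA : 0 < A) (f : S → Fin A → S) (R : S → Fin A → ℝ) :
    (m : ℕ) → ℕ → S → (Fin m → (Fin A → Fin n → (Fin T → Fin A))) → ℝ
  | 0, _, _, _ => 0
  | m + 1, i, s, u => R s (aF A T n hA f R i s (u 0))
      + retrec A T n hA f R m (i + 1) (stepF A T n hA f R i s (u 0)) (Fin.tail u)

/-- Total mass of `m` iterations of samples starting at iteration `i`. -/
noncomputable def Mt (A n : ℕ) : ℕ → ℕ → ℝ
  | _, 0 => 1
  | i, m + 1 => (((A : ℝ) ^ (i + 1)) ^ n) ^ A * Mt A n (i + 1) m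

lemma Mt_nonneg (A n : ℕ) (i m : ℕ) : 0 ≤ Mt A n i m := by
  induction m generalizing i with
  | zero => simp [Mt]
  | succ m ih => simp only [Mt]; exact mul_nonneg (by positivity) (ih (i + 1))

lemma one_le_Mt (A n : ℕ) (hA : 0 < A) (i m : ℕ) : 1 ≤ Mt A n i m := by
  induction m generalizing i with
  | zero => simp [Mt]
  | succ m ih =>
    simp only [Mt]
    have h1 := W_sum_pos A hA i n
    have h2 := ih (i + 1)
    nlinarith

lemma wrec_nonneg (A T n : ℕ) (hA : 0 < A) (f : S → Fin A → S) (R : S → Fin A → ℝ)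
    (pi : ℕ → S → Fin A → ℝ) (hpos : ∀ t s a, 0 < pi t s a) (m : ℕ) :
    ∀ (i : ℕ) (s : S) (u : Fin m → (Fin A → Fin n → (Fin T → Fin A))),
    0 ≤ wrec A T n hA f R pi m i s u := by
  induction m with
  | zero => intro i s u; simp [wrec]
  | succ m ih =>
    intro i s u
    simp only [wrec]
    exact mul_nonneg (W_nonneg A T n f pi hpos i s (u 0)) (ih _ _ _)

lemma gorp_main {A T n : ℕ} {f : S → Fin A → S} {R : S → Fin A → ℝ} {G : Set S}
    {pi : ℕ → S → Fin A → ℝ} (hA : 0 < A)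
    (habs : ∀ s ∈ G, ∀ a, f s a = s)
    (hR : R = fun s a => if s ∉ G ∧ f s a ∈ G then 1 else 0)
    (hpos : ∀ t s a, 0 < pi t s a) (hprob : ∀ t s, ∑ a : Fin A, pi t s a = 1)
    (hn0 : 0 < n) {p : ℝ} (hp : 0 < p) (hp1 : p ≤ 1)
    (hpQ : ∀ t s a, 1 ≤ t → t ≤ T →
      optQ A T f R t s a = 1 → p ≤ polQ A T f R pi t s a) :
    ∀ (m i : ℕ), i + m = T → ∀ s : S, (s ∈ G ∨ optV A f R m s = 1) →
    (1 - m * (1 - p) ^ n) * Mt A n i m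
      ≤ ∑ u : Fin m → (Fin A → Fin n → (Fin T → Fin A)),
          (if retrec A T n hA f R m i s u = optV A f R m s
            then wrec A T n hA f R pi m i s u else 0) := by
  intro m
  induction m with
  | zero =>
    intro i him s hgood
    have : ∀ u : Fin 0 → (Fin A → Fin n → (Fin T → Fin A)),
        (if retrec A T n hA f R 0 i s u = optV A f R 0 s
          then wrec A T n hA f R pi 0 i s u else 0) = 1 := by
      intro u
      simp [retrec, wrec, optV]
    rw [Finset.sum_congr rfl fun u _ => this u, Finset.sum_const, Finset.card_univ]
    simp [Mt]
  | succ m ih =>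
    intro i him s hgood
    set q : ℝ := (1 - p) ^ n with hqdef
    have hq0 : 0 ≤ q := by rw [hqdef]; exact pow_nonneg (by linarith) n
    have hq1 : q ≤ 1 := by
      rw [hqdef]
      exact pow_le_one₀ (by linarith) (by linarith)
    have hκ : (0:ℝ) ≤ (((A : ℝ) ^ (i + 1)) ^ n) ^ A := by positivity
    have hκ1 : (1:ℝ) ≤ (((A : ℝ) ^ (i + 1)) ^ n) ^ A := W_sum_pos A hA i n
    have hMt0 : 0 ≤ Mt A n (i + 1) m := Mt_nonneg A n (i + 1) m
    -- trivial case: the claimed bound is nonpositive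
    rcases le_or_gt (1 - (m + 1 : ℕ) * q) 0 with hneg | hposb
    · refine le_trans (mul_nonpos_of_nonpos_of_nonneg hneg (Mt_nonneg A n i (m + 1))) ?_
      refine Finset.sum_nonneg fun u _ => ?_
      split
      · exact wrec_nonneg A T n hA f R pi hpos _ _ _ _
      · exact le_refl 0
    have hmq : 0 ≤ 1 - m * q := by
      push_cast at hposb ⊢
      nlinarith
    -- nontrivial case
    have hi1 : i + 1 ≤ T := by omega
    have hsG' : ∀ hs : s ∈ G, True := fun _ => trivial
    -- good samples
    set Good : Finset (Fin A → Fin n → (Fin T → Fin A)) :=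
      Finset.univ.filter (fun c => stepF A T n hA f R i s c ∈ G
        ∨ optV A f R m (stepF A T n hA f R i s c) = 1) with hGood
    -- inner-sum rewriting for good samples
    have hinner : ∀ c ∈ Good,
        ∑ v : Fin m → (Fin A → Fin n → (Fin T → Fin A)),
          (if retrec A T n hA f R (m + 1) i s (Fin.cons c v) = optV A f R (m + 1) s
            then wrec A T n hA f R pi (m + 1) i s (Fin.cons c v) else 0)
        = W A T n f pi i s c
          * ∑ v : Fin m → (Fin A → Fin n → (Fin T → Fin A)),
              (if retrec A T n hA f R m (i + 1) (stepF A T n hA f R i s c) v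
                  = optV A f R m (stepF A T n hA f R i s c)
                then wrec A T n hA f R pi m (i + 1) (stepF A T n hA f R i s c) v
                else 0) := by
      intro c hc
      rw [Finset.mul_sum]
      refine Finset.sum_congr rfl fun v _ => ?_
      rw [mul_ite, mul_zero]
      have hcond : (retrec A T n hA f R (m + 1) i s (Fin.cons c v) = optV A f R (m + 1) s)
          ↔ (retrec A T n hA f R m (i + 1) (stepF A T n hA f R i s c) v
              = optV A f R m (stepF A T n hA f R i s c)) := by
        simp only [retrec, Fin.cons_zero, Fin.tail_cons]
        set b := aF A T n hA f R i s c with hb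
        have hstep : stepF A T n hA f R i s c = f s b := rfl
        rcases hgood with hsG | hsV
        · have hfb : f s b = s := habs s hsG b
          rw [hstep, hfb, R_G hR hsG, optV_G hA habs hR (m + 1) hsG,
            optV_G hA habs hR m hsG, zero_add]
        · have hsnotG : s ∉ G := by
            intro hsG
            rw [optV_G hA habs hR (m + 1) hsG] at hsV
            norm_num at hsV
          rw [hGood, Finset.mem_filter] at hc
          rcases hc.2 with h1 | h1
          · rw [hstep] at h1 ⊢
            rw [R_one hR hsnotG h1, hsV, optV_G hA habs hR m h1]
            constructor
            · intro h; linarith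
            · intro h; linarith
          · rw [hstep] at h1 ⊢
            have hfbnotG : f s b ∉ G := by
              intro hmem
              rw [optV_G hA habs hR m hmem] at h1
              norm_num at h1
            rw [R_notG hR hfbnotG, hsV, h1]
            constructor <;> intro h <;> linarith
      have hwr : wrec A T n hA f R pi (m + 1) i s (Fin.cons c v)
          = W A T n f pi i s c
            * wrec A T n hA f R pi m (i + 1) (stepF A T n hA f R i s c) v := by
        simp only [wrec, Fin.cons_zero, Fin.tail_cons]
      rw [if_congr hcond hwr rfl]
    -- mass of good samples
    have hW_sum := W_sum A T n f pi hprob i hi1 s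
    have hgoodmass : (1 - q) * (((A : ℝ) ^ (i + 1)) ^ n) ^ A
        ≤ ∑ c ∈ Good, W A T n f pi i s c := by
      rcases hgood with hsG | hsV
      · have : Good = Finset.univ := by
          rw [hGood]
          refine Finset.filter_true_of_mem fun c _ => Or.inl ?_
          show f s (aF A T n hA f R i s c) ∈ G
          rw [habs s hsG _]
          exact hsG
        rw [this, hW_sum]
        nlinarith
      · have hsnotG : s ∉ G := by
          intro hsG
          rw [optV_G hA habs hR (m + 1) hsG] at hsV
          norm_num at hsV
        obtain ⟨astar, hastar⟩ := optV_succ_exists hA m hsV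
        have hoptQ : optQ A T f R (i + 1) s astar = 1 := by
          rw [optQ, show T - (i + 1) = m by omega]
          exact hastar
        have hpolQ : p ≤ polQ A T f R pi (i + 1) s astar :=
          hpQ (i + 1) s astar (by omega) (by omega) hoptQ
        have hbad := badMass hA habs hR hpos hprob hn0 hp1 i m him s hsnotG astar hpolQ
        have hsplit := Finset.sum_filter_add_sum_filter_not Finset.univ
          (fun c : Fin A → Fin n → (Fin T → Fin A) =>
            stepF A T n hA f R i s c ∈ G ∨ optV A f R m (stepF A T n hA f R i s c) = 1)
          (W A T n f pi i s)
        rw [hW_sum] at hsplit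
        rw [hGood]
        nlinarith [hbad, hsplit]
    -- put everything together
    calc (1 - (m + 1 : ℕ) * q) * Mt A n i (m + 1)
        ≤ ((1 - m * q) * Mt A n (i + 1) m)
            * ((1 - q) * (((A : ℝ) ^ (i + 1)) ^ n) ^ A) := by
          simp only [Mt]
          have hmcast : (0:ℝ) ≤ (m:ℝ) := Nat.cast_nonneg m
          have key : (1 - ((m:ℝ) + 1) * q) ≤ (1 - (m:ℝ) * q) * (1 - q) := by
            nlinarith [mul_nonneg (mul_nonneg hmcast hq0) hq0]
          have key2 := mul_le_mul_of_nonneg_right key (mul_nonneg hκ hMt0)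
          push_cast
          nlinarith [key2]
      _ ≤ ((1 - m * q) * Mt A n (i + 1) m) * ∑ c ∈ Good, W A T n f pi i s c := by
          refine mul_le_mul_of_nonneg_left hgoodmass ?_
          exact mul_nonneg hmq hMt0
      _ = ∑ c ∈ Good, W A T n f pi i s c * ((1 - m * q) * Mt A n (i + 1) m) := by
          rw [Finset.mul_sum]
          exact Finset.sum_congr rfl fun c _ => by ring
      _ ≤ ∑ c ∈ Good, W A T n f pi i s c
            * ∑ v : Fin m → (Fin A → Fin n → (Fin T → Fin A)),
                (if retrec A T n hA f R m (i + 1) (stepF A T n hA f R i s c) v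
                    = optV A f R m (stepF A T n hA f R i s c)
                  then wrec A T n hA f R pi m (i + 1) (stepF A T n hA f R i s c) v
                  else 0) := by
          refine Finset.sum_le_sum fun c hc => ?_
          refine mul_le_mul_of_nonneg_left ?_ (W_nonneg A T n f pi hpos i s c)
          have hcmem : stepF A T n hA f R i s c ∈ G
              ∨ optV A f R m (stepF A T n hA f R i s c) = 1 := by
            rw [hGood, Finset.mem_filter] at hc
            exact hc.2
          exact ih (i + 1) (by omega) (stepF A T n hA f R i s c) hcmem
      _ = ∑ c ∈ Good, ∑ v : Fin m → (Fin A → Fin n → (Fin T → Fin A)),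
            (if retrec A T n hA f R (m + 1) i s (Fin.cons c v) = optV A f R (m + 1) s
              then wrec A T n hA f R pi (m + 1) i s (Fin.cons c v) else 0) := by
          exact (Finset.sum_congr rfl hinner).symm
      _ ≤ ∑ c : Fin A → Fin n → (Fin T → Fin A),
            ∑ v : Fin m → (Fin A → Fin n → (Fin T → Fin A)),
            (if retrec A T n hA f R (m + 1) i s (Fin.cons c v) = optV A f R (m + 1) s
              then wrec A T n hA f R pi (m + 1) i s (Fin.cons c v) else 0) := by
          refine Finset.sum_le_sum_of_subset_of_nonneg (Finset.subset_univ _) ?_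
          intro c _ _
          refine Finset.sum_nonneg fun v _ => ?_
          split
          · exact wrec_nonneg A T n hA f R pi hpos _ _ _ _
          · exact le_refl 0
      _ = ∑ u : Fin (m + 1) → (Fin A → Fin n → (Fin T → Fin A)),
            (if retrec A T n hA f R (m + 1) i s u = optV A f R (m + 1) s
              then wrec A T n hA f R pi (m + 1) i s u else 0) := by
          exact (sum_fn_succ' (fun u : Fin (m + 1) → (Fin A → Fin n → (Fin T → Fin A)) =>
            if retrec A T n hA f R (m + 1) i s u = optV A f R (m + 1) s
              then wrec A T n hA f R pi (m + 1) i s u else 0)).symm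

end Aux5

/--
Effective horizon of goal MDPs.  In a deterministic goal MDP (absorbing
goal set `G`, reward `1` exactly on transitions entering `G`, optimal return `1` from the
start state) with an exploration policy `pi` that gives every action positive probability,
suppose `p > 0` is such that from every state-action pair (at any timestep) from which the
goal is reachable, the probability that `pi` reaches the goal by time `T` is at least `p`.
Run GORP with lookahead `k = 1` and `n ≥ log(2T)/p` rollouts per action: at each iteration
`i` the estimate `Q̂` of an action is the average of `n` rollout returns (the action
followed by `pi` until the horizon), and GORP commits to the least maximizer of `Q̂`.
Then the probability (under the rollout randomness `ω`, whose distribution is the product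
of the policy path-probabilities of all sampled suffixes) that GORP's action sequence is
optimal is at least `1/2`.  (Hence `n_1 ≤ ⌈log(2T)/p⌉` and the effective horizon satisfies
`H ≤ 1 + log_A(log(2T)/p)`.)
-/
theorem goal_mdp_gorp_success
    {S : Type*} (A T n : ℕ) (hA : 0 < A) (hT : 1 ≤ T)
    (f : S → Fin A → S) (R : S → Fin A → ℝ) (s1 : S)
    (G : Set S)
    (habs : ∀ s ∈ G, ∀ a, f s a = s)
    (hR : R = fun s a => if s ∉ G ∧ f s a ∈ G then 1 else 0)
    (pi : ℕ → S → Fin A → ℝ)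
    (hpos : ∀ t s a, 0 < pi t s a)
    (hprob : ∀ t s, ∑ a : Fin A, pi t s a = 1)
    (hreach : optV A f R T s1 = 1)
    (p : ℝ) (hp : 0 < p)
    (hpQ : ∀ t s a, 1 ≤ t → t ≤ T →
      optQ A T f R t s a = 1 → p ≤ polQ A T f R pi t s a)
    (hn : Real.log (2 * T) / p ≤ (n : ℝ))
    -- GORP's Monte-Carlo Q-value estimates (lookahead k = 1):
    -- ω i a j is the random action suffix of the j-th rollout for action a at iteration i
    (Qhat : ℕ → S → Fin A → (Fin T → Fin A → Fin n → (Fin T → Fin A)) → ℝ)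
    (hQhat : Qhat = fun i s a ω =>
      (∑ j : Fin n,
        seqReturn A f R s
          ((a :: List.ofFn (ω ⟨min i (T - 1), by omega⟩ a j)).take (T - i))) / n)
    -- GORP's trajectory: `act ω i` is the least maximizer of `Q̂` at iteration i,
    -- `traj ω i` the state reached at iteration i
    (traj : (Fin T → Fin A → Fin n → (Fin T → Fin A)) → ℕ → S)
    (act : (Fin T → Fin A → Fin n → (Fin T → Fin A)) → ℕ → Fin A)
    (htraj0 : ∀ ω, traj ω 0 = s1)
    (htraj : ∀ ω i, traj ω (i + 1) = f (traj ω i) (act ω i))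
    (hact : ∀ ω i,
      (∀ a' : Fin A, Qhat i (traj ω i) a' ω ≤ Qhat i (traj ω i) (act ω i) ω) ∧
      (∀ a : Fin A,
        (∀ a' : Fin A, Qhat i (traj ω i) a' ω ≤ Qhat i (traj ω i) a ω) →
        act ω i ≤ a))
    -- probability weight of a realization ω of all rollout suffixes
    (wt : (Fin T → Fin A → Fin n → (Fin T → Fin A)) → ℝ)
    (hwt : wt = fun ω => ∏ i : Fin T, ∏ a : Fin A, ∏ j : Fin n,
      pathWeight A f pi ((i : ℕ) + 2) (f (traj ω i) a)
        ((List.ofFn (ω i a j)).take (T - (i : ℕ) - 1))) :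
    1 ≤ 2 * ∑ ω ∈ Finset.univ.filter
        (fun ω : Fin T → Fin A → Fin n → (Fin T → Fin A) =>
          seqReturn A f R s1 (List.ofFn (fun i : Fin T => act ω i))
            = optV A f R T s1),
        wt ω := by
  classical
  -- basic numeric facts
  have hT1 : (1:ℝ) ≤ (T:ℝ) := by exact_mod_cast hT
  have h2T : (1:ℝ) < 2 * T := by linarith
  have hlog : 0 < Real.log (2 * T) := Real.log_pos h2T
  have hn0 : 0 < n := by
    rcases Nat.eq_zero_or_pos n with h | h
    · exfalso
      rw [h] at hn
      have := div_pos hlog hp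
      push_cast at hn
      linarith
    · exact h
  -- p ≤ 1
  have hp1 : p ≤ 1 := by
    obtain ⟨a, ha⟩ := optV_succ_exists (f := f) (R := R) hA (T - 1) (s := s1)
      (by rw [show T - 1 + 1 = T by omega]; exact hreach)
    have hoptQ : optQ A T f R 1 s1 a = 1 := ha
    have h2 := hpQ 1 s1 a le_rfl hT hoptQ
    have h3 : polQ A T f R pi 1 s1 a ≤ 1 := by
      rw [polQ]
      by_cases hg : f s1 a ∈ G
      · rw [polV_G habs hR _ _ hg]
        have := R_le_one hR s1 a; linarith
      · rw [R_notG hR hg]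
        have := polV_le_one habs hR hpos hprob 2 (T - 1) (f s1 a); linarith
    linarith
  -- the exponential bound
  have hq : (1 - p) ^ n ≤ 1 / (2 * T) := by
    have h1 : 1 - p ≤ Real.exp (-p) := by
      have := Real.add_one_le_exp (-p); linarith
    have h2 : (1 - p) ^ n ≤ Real.exp (-p) ^ n := pow_le_pow_left₀ (by linarith) h1 n
    rw [← Real.exp_nat_mul] at h2
    have h3 : Real.exp ((n:ℝ) * -p) ≤ Real.exp (-(Real.log (2 * T))) := by
      apply Real.exp_le_exp.2
      have hnp := (div_le_iff₀ hp).1 hn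
      nlinarith
    rw [Real.exp_neg, Real.exp_log (by linarith : (0:ℝ) < 2 * T)] at h3
    rw [one_div]
    linarith
  have hTq : (T:ℝ) * (1 - p) ^ n ≤ 1 / 2 := by
    have hTpos : (0:ℝ) < T := by linarith
    have := mul_le_mul_of_nonneg_left hq (le_of_lt hTpos)
    have heq : (T:ℝ) * (1 / (2 * T)) = 1 / 2 := by
      field_simp
    linarith [this, heq.symm.le]
  -- bridge: GORP's action is the least maximizer `aF`
  have hactF : ∀ (ω : Fin T → Fin A → Fin n → (Fin T → Fin A)) (i : ℕ) (hi : i < T),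
      act ω i = aF A T n hA f R i (traj ω i) (ω ⟨i, hi⟩) := by
    intro ω i hi
    have hQh : ∀ a, Qhat i (traj ω i) a ω
        = qh A T n f R i (traj ω i) (ω ⟨i, hi⟩) a := by
      intro a
      rw [hQhat, qh]
      simp only [show min i (T - 1) = i from by omega]
    obtain ⟨hmax, hleast⟩ := hact ω i
    refine le_antisymm ?_ ?_
    · refine hleast _ fun a' => ?_
      rw [hQh a', hQh _]
      exact aF_max A T n hA f R i (traj ω i) (ω ⟨i, hi⟩) a'
    · refine aF_least A T n hA f R i (traj ω i) (ω ⟨i, hi⟩) _ fun a' => ?_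
      rw [← hQh a', ← hQh _]
      exact hmax a'
  have htrajF : ∀ (ω : Fin T → Fin A → Fin n → (Fin T → Fin A)) (i : ℕ) (hi : i < T),
      traj ω (i + 1) = stepF A T n hA f R i (traj ω i) (ω ⟨i, hi⟩) := by
    intro ω i hi
    rw [htraj ω i, hactF ω i hi]
    rfl
  -- bridge: the recursive run agrees with `traj`/`act`/`wt`
  have L : ∀ (m i : ℕ) (him : i + m = T),
      ∀ (ω : Fin T → Fin A → Fin n → (Fin T → Fin A))
        (u : Fin m → (Fin A → Fin n → (Fin T → Fin A))),
      (∀ j : Fin m, u j = ω ⟨i + (j:ℕ), by omega⟩) →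
      wrec A T n hA f R pi m i (traj ω i) u
          = (∏ j : Fin m, W A T n f pi (i + (j:ℕ)) (traj ω (i + (j:ℕ)))
              (ω ⟨i + (j:ℕ), by omega⟩))
        ∧ retrec A T n hA f R m i (traj ω i) u
          = seqReturn A f R (traj ω i)
              (List.ofFn (fun j : Fin m => act ω (i + (j:ℕ)))) := by
    intro m
    induction m with
    | zero =>
      intro i him ω u hu
      refine ⟨by simp [wrec], by simp [retrec, seqReturn, List.ofFn_zero]⟩
    | succ m ih =>
      intro i him ω u hu
      have hiT : i < T := by omega
      have hu0 : u 0 = ω ⟨i, hiT⟩ := by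
        rw [hu 0]
        exact congrArg ω (Fin.ext (by simp))
      have hstep : stepF A T n hA f R i (traj ω i) (u 0) = traj ω (i + 1) := by
        rw [hu0, ← htrajF ω i hiT]
      have htail : ∀ j : Fin m, (Fin.tail u) j = ω ⟨(i + 1) + (j:ℕ), by omega⟩ := by
        intro j
        show u j.succ = _
        rw [hu j.succ]
        refine congrArg ω (Fin.ext ?_)
        simp [Fin.val_succ]
        omega
      obtain ⟨ihw, ihr⟩ := ih (i + 1) (by omega) ω (Fin.tail u) htail
      have hWcongr : ∀ (x y : ℕ), x = y → ∀ (hx : x < T) (hy : y < T),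
          W A T n f pi x (traj ω x) (ω ⟨x, hx⟩)
            = W A T n f pi y (traj ω y) (ω ⟨y, hy⟩) := by
        intro x y hxy hx hy
        subst hxy
        rfl
      constructor
      · simp only [wrec]
        rw [hstep, ihw, hu0]
        rw [Fin.prod_univ_succ (fun j : Fin (m + 1) => W A T n f pi (i + (j:ℕ))
          (traj ω (i + (j:ℕ))) (ω ⟨i + (j:ℕ), by omega⟩))]
        simp only [Fin.val_zero, add_zero, Fin.val_succ]
        exact congrArg₂ (fun x y : ℝ => x * y) rfl
          (Finset.prod_congr rfl fun j _ =>
            hWcongr ((i + 1) + (j:ℕ)) (i + ((j:ℕ) + 1)) (by omega) (by omega) (by omega))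
      · simp only [retrec]
        rw [hstep, ihr, hu0]
        have hofn : List.ofFn (fun j : Fin (m + 1) => act ω (i + (j:ℕ)))
            = act ω i :: List.ofFn (fun j : Fin m => act ω ((i + 1) + (j:ℕ))) := by
          rw [List.ofFn_succ]
          simp only [Fin.val_succ, Fin.val_zero, add_zero]
          have : (fun j : Fin m => act ω (i + ((j:ℕ) + 1)))
              = fun j : Fin m => act ω ((i + 1) + (j:ℕ)) := by
            funext j
            congr 1
            omega
          rw [this]
        rw [hofn]
        simp only [seqReturn]
        rw [← hactF ω i hiT, ← htraj ω i]
  -- identify the two sums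
  have hsum : ∑ ω ∈ Finset.univ.filter
        (fun ω : Fin T → Fin A → Fin n → (Fin T → Fin A) =>
          seqReturn A f R s1 (List.ofFn (fun i : Fin T => act ω i))
            = optV A f R T s1), wt ω
      = ∑ u : Fin T → (Fin A → Fin n → (Fin T → Fin A)),
          (if retrec A T n hA f R T 0 s1 u = optV A f R T s1
            then wrec A T n hA f R pi T 0 s1 u else 0) := by
    rw [Finset.sum_filter]
    refine Finset.sum_congr rfl fun ω _ => ?_
    have hωsuffix : ∀ j : Fin T, ω j = ω ⟨0 + (j:ℕ), by omega⟩ :=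
      fun j => congrArg ω (Fin.ext (by simp))
    obtain ⟨hw, hr⟩ := L T 0 (by omega) ω ω hωsuffix
    rw [htraj0 ω] at hw hr
    have hr' : retrec A T n hA f R T 0 s1 ω
        = seqReturn A f R s1 (List.ofFn (fun i : Fin T => act ω i)) := by
      rw [hr]
      simp only [zero_add]
    have hw' : wrec A T n hA f R pi T 0 s1 ω = wt ω := by
      rw [hw, hwt]
      simp only [zero_add, Fin.eta, W]
    rw [← hr', ← hw']
  -- main estimate
  have main := gorp_main (G := G) hA habs hR hpos hprob hn0 hp hp1 hpQ T 0 (by omega)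
    s1 (Or.inr hreach)
  have hMt1 : 1 ≤ Mt A n 0 T := one_le_Mt A n hA 0 T
  rw [hsum]
  have hhalf : (1:ℝ) / 2 ≤ (1 - (T:ℝ) * (1 - p) ^ n) * Mt A n 0 T := by
    nlinarith [hTq, hMt1, Mt_nonneg A n 0 T]
  have : (1:ℝ) / 2 ≤ ∑ u : Fin T → (Fin A → Fin n → (Fin T → Fin A)),
      (if retrec A T n hA f R T 0 s1 u = optV A f R T s1
        then wrec A T n hA f R pi T 0 s1 u else 0) := by
    refine le_trans hhalf (le_trans ?_ main)
    push_cast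
    linarith
  linarith
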